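/- Let X₀ and X₁ be Banach lattices of measurable functions on the same underlying measure space. Then the Banach lattice X₀+X₁ is a complete lattice if and only if both X₀ and X₁ are complete lattices. -/

import Mathlib

open MeasureTheory

/-- A Banach lattice of (a.e.-equivalence classes of) real-valued measurable
functions on a measure space `(Ω, μ)`: a linear subspace of `Ω →ₘ[μ] ℝ` with a complete
norm satisfying the lattice (ideal) property. -/
structure BanachFunctionLattice (Ω : Type*) [MeasurableSpace Ω] (μ : MeasureTheory.Measure Ω) where
  carrier : Set (Ω →ₘ[μ] ℝ)
  norm : (Ω →ₘ[μ] ℝ) → ℝ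
  zero_mem : 0 ∈ carrier
  add_mem : ∀ {f g}, f ∈ carrier → g ∈ carrier → f + g ∈ carrier
  smul_mem : ∀ (c : ℝ) {f}, f ∈ carrier → c • f ∈ carrier
  norm_nonneg : ∀ f ∈ carrier, 0 ≤ norm f
  norm_eq_zero_iff : ∀ f ∈ carrier, (norm f = 0 ↔ f = 0)
  norm_add_le : ∀ f ∈ carrier, ∀ g ∈ carrier, norm (f + g) ≤ norm f + norm g
  norm_smul : ∀ (c : ℝ), ∀ f ∈ carrier, norm (c • f) = |c| * norm f
  ideal_mem : ∀ f ∈ carrier, ∀ g : (Ω →ₘ[μ] ℝ), |g| ≤ |f| → g ∈ carrier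
  ideal_norm_le : ∀ f ∈ carrier, ∀ g : (Ω →ₘ[μ] ℝ), |g| ≤ |f| → norm g ≤ norm f
  complete : ∀ u : ℕ → (Ω →ₘ[μ] ℝ), (∀ n, u n ∈ carrier) →
    (∀ ε > 0, ∃ N, ∀ m ≥ N, ∀ n ≥ N, norm (u m - u n) < ε) →
    ∃ f ∈ carrier, ∀ ε > 0, ∃ N, ∀ n ≥ N, norm (u n - f) < ε

variable {Ω : Type*} [MeasurableSpace Ω] {μ : MeasureTheory.Measure Ω}

/-- The a.e.-equivalence class of `ω ↦ |f ω| ^ p` (real power). -/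
noncomputable def absRpow (p : ℝ) (f : Ω →ₘ[μ] ℝ) : Ω →ₘ[μ] ℝ :=
  AEEqFun.mk (fun ω => |f ω| ^ p)
    (((by measurability : Measurable fun x : ℝ => |x| ^ p).comp_aemeasurable
      f.aemeasurable).aestronglyMeasurable)

/-- A (not necessarily complete) normed function space: the data of a carrier and a norm.
Used to speak about `p`-convexifications without re-proving all the axioms. -/
structure FunctionSpace (Ω : Type*) [MeasurableSpace Ω] (μ : MeasureTheory.Measure Ω) where
  carrier : Set (Ω →ₘ[μ] ℝ)
  norm : (Ω →ₘ[μ] ℝ) → ℝ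

/-- The carrier-and-norm data underlying a Banach function lattice. -/
def BanachFunctionLattice.toFunctionSpace (X : BanachFunctionLattice Ω μ) :
    FunctionSpace Ω μ := ⟨X.carrier, X.norm⟩

/-- The `p`-convexification `X^(p)`: all `f` with `|f|^p ∈ X`, with norm `‖|f|^p‖_X^(1/p)`. -/
noncomputable def pConv (X : BanachFunctionLattice Ω μ) (p : ℝ) : FunctionSpace Ω μ where
  carrier := {f | absRpow p f ∈ X.carrier}
  norm := fun f => (X.norm (absRpow p f)) ^ (1 / p)

/-- The sum space `X₀ + X₁` (as a set). -/
def sumSet (A₀ A₁ : FunctionSpace Ω μ) : Set (Ω →ₘ[μ] ℝ) :=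
  {f | ∃ a₀ ∈ A₀.carrier, ∃ a₁ ∈ A₁.carrier, f = a₀ + a₁}

/-- The Peetre `K`-functional `K(t, f; A₀, A₁)`. -/
noncomputable def Kfun (A₀ A₁ : FunctionSpace Ω μ) (t : ℝ) (f : Ω →ₘ[μ] ℝ) : ℝ :=
  sInf {r | ∃ a₀ ∈ A₀.carrier, ∃ a₁ ∈ A₁.carrier,
    f = a₀ + a₁ ∧ r = A₀.norm a₀ + t * A₁.norm a₁}

/-- The norm of the sum space `X₀ + X₁`, namely `K(1, ·)`. -/
noncomputable def sumNorm (A₀ A₁ : FunctionSpace Ω μ) (f : Ω →ₘ[μ] ℝ) : ℝ :=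
  Kfun A₀ A₁ 1 f

/-- The functional `D(t, f; A₀, A₁)`, the analogue of the `K`-functional restricted to
disjointly supported decompositions. -/
noncomputable def Dfun (A₀ A₁ : FunctionSpace Ω μ) (t : ℝ) (f : Ω →ₘ[μ] ℝ) : ℝ :=
  sInf {r | ∃ a₀ ∈ A₀.carrier, ∃ a₁ ∈ A₁.carrier,
    f = a₀ + a₁ ∧ a₀ * a₁ = 0 ∧ r = A₀.norm a₀ + t * A₁.norm a₁}

/-- `T : (A₀, A₁) → (A₀, A₁)` is a bounded linear operator: `T` is linear on `A₀ + A₁`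
and its restriction to each `Aⱼ` is a bounded operator from `Aⱼ` into itself. -/
def IsBoundedCoupleOperator (A₀ A₁ : FunctionSpace Ω μ) (T : (Ω →ₘ[μ] ℝ) → (Ω →ₘ[μ] ℝ)) :
    Prop :=
  (∀ f ∈ sumSet A₀ A₁, ∀ g ∈ sumSet A₀ A₁, T (f + g) = T f + T g) ∧
  (∀ (c : ℝ), ∀ f ∈ sumSet A₀ A₁, T (c • f) = c • T f) ∧
  (∀ f ∈ A₀.carrier, T f ∈ A₀.carrier) ∧
  (∀ f ∈ A₁.carrier, T f ∈ A₁.carrier) ∧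
  (∃ C₀ : ℝ, ∀ f ∈ A₀.carrier, A₀.norm (T f) ≤ C₀ * A₀.norm f) ∧
  (∃ C₁ : ℝ, ∀ f ∈ A₁.carrier, A₁.norm (T f) ≤ C₁ * A₁.norm f)

/-- `‖T‖_{Aⱼ → Aⱼ} ≤ C` for `j = 0, 1`. -/
def CoupleOperatorNormLE (A₀ A₁ : FunctionSpace Ω μ) (T : (Ω →ₘ[μ] ℝ) → (Ω →ₘ[μ] ℝ))
    (C : ℝ) : Prop :=
  (∀ f ∈ A₀.carrier, A₀.norm (T f) ≤ C * A₀.norm f) ∧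
  (∀ f ∈ A₁.carrier, A₁.norm (T f) ≤ C * A₁.norm f)

/-- `T` is a positive operator on `A₀ + A₁`. -/
def IsPositiveOn (A₀ A₁ : FunctionSpace Ω μ) (T : (Ω →ₘ[μ] ℝ) → (Ω →ₘ[μ] ℝ)) : Prop :=
  ∀ h ∈ sumSet A₀ A₁, 0 ≤ h → 0 ≤ T h

/-- `(A₀, A₁)` is a Calderón couple. -/
def IsCalderonCouple (A₀ A₁ : FunctionSpace Ω μ) : Prop :=
  ∀ f ∈ sumSet A₀ A₁, ∀ g ∈ sumSet A₀ A₁,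
    (∀ t > 0, Kfun A₀ A₁ t g ≤ Kfun A₀ A₁ t f) →
    ∃ T, IsBoundedCoupleOperator A₀ A₁ T ∧ T f = g

/-- `(A₀, A₁)` is a `C`-Calderón couple. -/
def IsCCalderonCouple (A₀ A₁ : FunctionSpace Ω μ) (C : ℝ) : Prop :=
  ∀ f ∈ sumSet A₀ A₁, ∀ g ∈ sumSet A₀ A₁,
    (∀ t > 0, Kfun A₀ A₁ t g ≤ Kfun A₀ A₁ t f) →
    ∃ T, IsBoundedCoupleOperator A₀ A₁ T ∧ T f = g ∧ CoupleOperatorNormLE A₀ A₁ T C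

/-- `(A₀, A₁)` is a positive Calderón couple. -/
def IsPositiveCalderonCouple (A₀ A₁ : FunctionSpace Ω μ) : Prop :=
  ∀ f ∈ sumSet A₀ A₁, ∀ g ∈ sumSet A₀ A₁, 0 ≤ f → 0 ≤ g →
    (∀ t > 0, Kfun A₀ A₁ t g ≤ Kfun A₀ A₁ t f) →
    ∃ T, IsBoundedCoupleOperator A₀ A₁ T ∧ IsPositiveOn A₀ A₁ T ∧ T f = g

/-- `(A₀, A₁)` is a positive `C`-Calderón couple. -/
def IsPositiveCCalderonCouple (A₀ A₁ : FunctionSpace Ω μ) (C : ℝ) : Prop :=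
  ∀ f ∈ sumSet A₀ A₁, ∀ g ∈ sumSet A₀ A₁, 0 ≤ f → 0 ≤ g →
    (∀ t > 0, Kfun A₀ A₁ t g ≤ Kfun A₀ A₁ t f) →
    ∃ T, IsBoundedCoupleOperator A₀ A₁ T ∧ IsPositiveOn A₀ A₁ T ∧ T f = g ∧
      CoupleOperatorNormLE A₀ A₁ T C

/-- A set `S` of (classes of) measurable functions has the Least Upper Bound Property:
every nonempty subset of `S` bounded above by an element of `S` has a least upper bound
in `S` (for the a.e. pointwise order). -/
def HasLUBP (S : Set (Ω →ₘ[μ] ℝ)) : Prop :=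
  ∀ A ⊆ S, A.Nonempty → (∃ b ∈ S, ∀ a ∈ A, a ≤ b) →
    ∃ y ∈ S, (∀ a ∈ A, a ≤ y) ∧ ∀ z ∈ S, (∀ a ∈ A, a ≤ z) → y ≤ z

namespace BFLaux

variable (f g h k : Ω →ₘ[μ] ℝ)

lemma ae_le {f g : Ω →ₘ[μ] ℝ} (hfg : f ≤ g) : ∀ᵐ ω ∂μ, f ω ≤ g ω :=
  AEEqFun.coeFn_le.mpr hfg

lemma le_of_ae {f g : Ω →ₘ[μ] ℝ} (hfg : ∀ᵐ ω ∂μ, f ω ≤ g ω) : f ≤ g :=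
  AEEqFun.coeFn_le.mp hfg

lemma add_mono {f g h k : Ω →ₘ[μ] ℝ} (h1 : f ≤ g) (h2 : h ≤ k) : f + h ≤ g + k := by
  refine le_of_ae ?_
  filter_upwards [AEEqFun.coeFn_add f h, AEEqFun.coeFn_add g k, ae_le h1, ae_le h2]
    with ω e1 e2 l1 l2
  simp only [e1, e2, Pi.add_apply]; linarith

lemma sub_mono {f g h : Ω →ₘ[μ] ℝ} (h1 : f ≤ g) : f - h ≤ g - h := by
  refine le_of_ae ?_
  filter_upwards [AEEqFun.coeFn_sub f h, AEEqFun.coeFn_sub g h, ae_le h1] with ω e1 e2 l1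
  simp only [e1, e2, Pi.sub_apply]; linarith

lemma decomp : f ⊓ g + ((f - g) ⊔ 0) = f := by
  refine AEEqFun.ext ?_
  filter_upwards [AEEqFun.coeFn_add (f ⊓ g) ((f - g) ⊔ 0), AEEqFun.coeFn_inf f g,
    AEEqFun.coeFn_sup (f - g) 0, AEEqFun.coeFn_sub f g, AEEqFun.coeFn_zero (β := ℝ) (μ := μ)]
    with ω e1 e2 e3 e4 e5
  simp only [e1, e2, Pi.add_apply] at *
  rw [e3, e4, e5]
  simp only [Pi.sub_apply, Pi.zero_apply]
  rcases le_total (f ω) (g ω) with hle | hle <;> simp [min_def, max_def, hle] <;> linarith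

lemma sup_zero_le {f g h : Ω →ₘ[μ] ℝ} (h1 : f ≤ g + h) (h2 : 0 ≤ h) : (f - g) ⊔ 0 ≤ h := by
  refine le_of_ae ?_
  filter_upwards [AEEqFun.coeFn_sup (f - g) 0, AEEqFun.coeFn_sub f g,
    AEEqFun.coeFn_zero (β := ℝ) (μ := μ), AEEqFun.coeFn_add g h, ae_le h1, ae_le h2]
    with ω e1 e2 e3 e4 l1 l2
  rw [e4] at l1
  rw [e3] at l2
  simp only [Pi.add_apply, Pi.zero_apply] at l1 l2
  rw [e1, e2, e3]
  simp only [Pi.sub_apply, Pi.zero_apply, max_le_iff]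
  constructor <;> linarith

lemma sup_zero_mono {f g h : Ω →ₘ[μ] ℝ} (h1 : f ≤ g) : (f - h) ⊔ 0 ≤ (g - h) ⊔ 0 :=
  sup_le_sup_right (sub_mono h1) 0

lemma abs_le_of_nonneg_le {f g : Ω →ₘ[μ] ℝ} (h0 : 0 ≤ f) (h1 : f ≤ g) : |f| ≤ |g| := by
  refine le_of_ae ?_
  filter_upwards [AEEqFun.coeFn_abs f, AEEqFun.coeFn_abs g, ae_le h0, ae_le h1,
    AEEqFun.coeFn_zero (β := ℝ) (μ := μ)] with ω e1 e2 l0 l1 e3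
  rw [e1, e2]
  rw [e3] at l0
  simp only [Pi.zero_apply] at l0
  rw [abs_of_nonneg l0]
  exact l1.trans (le_abs_self _)

lemma abs_abs_le : |(|f|)| ≤ |f| := by
  refine le_of_ae ?_
  filter_upwards [AEEqFun.coeFn_abs (|f|), AEEqFun.coeFn_abs f] with ω e1 e2
  rw [e1, e2, abs_abs]

lemma le_abs : f ≤ |f| := by
  refine le_of_ae ?_
  filter_upwards [AEEqFun.coeFn_abs f] with ω e1
  rw [e1]; exact le_abs_self _

lemma abs_nonneg' : 0 ≤ |f| := by
  refine le_of_ae ?_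
  filter_upwards [AEEqFun.coeFn_abs f, AEEqFun.coeFn_zero (β := ℝ) (μ := μ)] with ω e1 e2
  rw [e1, e2]; simpa using abs_nonneg (f ω)

lemma abs_le_abs_add_abs {f g h : Ω →ₘ[μ] ℝ} (h1 : f ≤ g) (h2 : g ≤ h) :
    |g| ≤ |(|f| + |h|)| := by
  refine le_of_ae ?_
  filter_upwards [AEEqFun.coeFn_abs g, AEEqFun.coeFn_abs (|f| + |h|),
    AEEqFun.coeFn_add (|f|) (|h|), AEEqFun.coeFn_abs f, AEEqFun.coeFn_abs h,
    ae_le h1, ae_le h2] with ω e1 e2 e3 e4 e5 l1 l2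
  rw [e1, e2, e3]
  simp only [Pi.add_apply]
  rw [e4, e5]
  have : |g ω| ≤ |f ω| + |h ω| := by
    rw [abs_le]; constructor
    · nlinarith [neg_abs_le (f ω), le_abs_self (h ω), abs_nonneg (f ω), abs_nonneg (h ω)]
    · nlinarith [le_abs_self (h ω), abs_nonneg (f ω)]
  exact this.trans (le_abs_self _)

/-- Riesz decomposition in the sum. -/
lemma riesz {g f₀ f₁ : Ω →ₘ[μ] ℝ} (hg : |g| ≤ |f₀| + |f₁|) :
    ∃ g₀ g₁ : Ω →ₘ[μ] ℝ, g = g₀ + g₁ ∧ |g₀| ≤ |f₀| ∧ |g₁| ≤ |f₁| := by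
  refine ⟨(g ⊔ (-|f₀|)) ⊓ |f₀|, g - (g ⊔ (-|f₀|)) ⊓ |f₀|, by abel, ?_, ?_⟩
  · refine le_of_ae ?_
    filter_upwards [AEEqFun.coeFn_abs ((g ⊔ (-|f₀|)) ⊓ |f₀|),
      AEEqFun.coeFn_inf (g ⊔ (-|f₀|)) (|f₀|), AEEqFun.coeFn_sup g (-|f₀|),
      AEEqFun.coeFn_neg (|f₀|), AEEqFun.coeFn_abs f₀] with ω e1 e2 e3 e4 e5
    rw [e1, e2, e3, e4]
    simp only [Pi.neg_apply]
    rw [e5]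
    have h0 : (0:ℝ) ≤ |f₀ ω| := abs_nonneg _
    rw [abs_le]
    constructor
    · simp only [le_inf_iff, le_sup_iff]
      constructor
      · right; linarith
      · linarith
    · exact inf_le_right
  · refine le_of_ae ?_
    filter_upwards [AEEqFun.coeFn_abs (g - (g ⊔ (-|f₀|)) ⊓ |f₀|),
      AEEqFun.coeFn_sub g ((g ⊔ (-|f₀|)) ⊓ |f₀|),
      AEEqFun.coeFn_inf (g ⊔ (-|f₀|)) (|f₀|), AEEqFun.coeFn_sup g (-|f₀|),
      AEEqFun.coeFn_neg (|f₀|), AEEqFun.coeFn_abs f₀, AEEqFun.coeFn_abs f₁,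
      ae_le hg, AEEqFun.coeFn_abs g, AEEqFun.coeFn_add (|f₀|) (|f₁|)]
      with ω e1 e2 e3 e4 e5 e6 e7 l e8 e9
    rw [e8, e9] at l
    simp only [Pi.add_apply] at l
    rw [e6, e7] at l
    rw [e1, e2]
    simp only [Pi.sub_apply]
    rw [e3, e4, e5]
    simp only [Pi.neg_apply]
    rw [e6, e7]
    have h0 : (0:ℝ) ≤ |f₀ ω| := abs_nonneg _
    have h1 : (0:ℝ) ≤ |f₁ ω| := abs_nonneg _
    have hl := abs_le.mp l
    rw [abs_le]
    rcases le_total (g ω) (-|f₀ ω|) with hc | hc <;>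
      rcases le_total (g ω) (|f₀ ω|) with hd | hd <;>
      simp only [max_def, min_def] <;>
      split_ifs <;> constructor <;> linarith

lemma sub_mem (X : BanachFunctionLattice Ω μ) {f g : Ω →ₘ[μ] ℝ}
    (hf : f ∈ X.carrier) (hg : g ∈ X.carrier) : f - g ∈ X.carrier := by
  rw [sub_eq_add_neg, ← neg_one_smul ℝ g]
  exact X.add_mem hf (X.smul_mem _ hg)

lemma abs_mem (X : BanachFunctionLattice Ω μ) {f : Ω →ₘ[μ] ℝ}
    (hf : f ∈ X.carrier) : |f| ∈ X.carrier :=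
  X.ideal_mem f hf _ (abs_abs_le f)

lemma hasLUBP_of_sum_left (X₀ X₁ : BanachFunctionLattice Ω μ)
    (H : HasLUBP (sumSet X₀.toFunctionSpace X₁.toFunctionSpace)) : HasLUBP X₀.carrier := by
  intro A hA hne hbd
  obtain ⟨b, hb, hub⟩ := hbd
  obtain ⟨a, ha⟩ := hne
  have hsub : A ⊆ sumSet X₀.toFunctionSpace X₁.toFunctionSpace :=
    fun x hx => ⟨x, hA hx, 0, X₁.zero_mem, (add_zero x).symm⟩
  have hbsum : b ∈ sumSet X₀.toFunctionSpace X₁.toFunctionSpace :=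
    ⟨b, hb, 0, X₁.zero_mem, (add_zero b).symm⟩
  obtain ⟨y, hy, hyub, hyleast⟩ := H A hsub ⟨a, ha⟩ ⟨b, hbsum, hub⟩
  have h1 : a ≤ y := hyub a ha
  have h2 : y ≤ b := hyleast b hbsum hub
  have hyX : y ∈ X₀.carrier :=
    X₀.ideal_mem (|a| + |b|) (X₀.add_mem (abs_mem X₀ (hA ha)) (abs_mem X₀ hb)) y
      (abs_le_abs_add_abs h1 h2)
  exact ⟨y, hyX, hyub, fun z hz hzub =>
    hyleast z ⟨z, hz, 0, X₁.zero_mem, (add_zero z).symm⟩ hzub⟩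

lemma hasLUBP_of_sum_right (X₀ X₁ : BanachFunctionLattice Ω μ)
    (H : HasLUBP (sumSet X₀.toFunctionSpace X₁.toFunctionSpace)) : HasLUBP X₁.carrier := by
  intro A hA hne hbd
  obtain ⟨b, hb, hub⟩ := hbd
  obtain ⟨a, ha⟩ := hne
  have hsub : A ⊆ sumSet X₀.toFunctionSpace X₁.toFunctionSpace :=
    fun x hx => ⟨0, X₀.zero_mem, x, hA hx, (zero_add x).symm⟩
  have hbsum : b ∈ sumSet X₀.toFunctionSpace X₁.toFunctionSpace :=
    ⟨0, X₀.zero_mem, b, hb, (zero_add b).symm⟩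
  obtain ⟨y, hy, hyub, hyleast⟩ := H A hsub ⟨a, ha⟩ ⟨b, hbsum, hub⟩
  have h1 : a ≤ y := hyub a ha
  have h2 : y ≤ b := hyleast b hbsum hub
  have hyX : y ∈ X₁.carrier :=
    X₁.ideal_mem (|a| + |b|) (X₁.add_mem (abs_mem X₁ (hA ha)) (abs_mem X₁ hb)) y
      (abs_le_abs_add_abs h1 h2)
  exact ⟨y, hyX, hyub, fun z hz hzub =>
    hyleast z ⟨0, X₀.zero_mem, z, hz, (zero_add z).symm⟩ hzub⟩

lemma hasLUBP_sum_of_both (X₀ X₁ : BanachFunctionLattice Ω μ)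
    (H₀ : HasLUBP X₀.carrier) (H₁ : HasLUBP X₁.carrier) :
    HasLUBP (sumSet X₀.toFunctionSpace X₁.toFunctionSpace) := by
  intro A hA hne hbd
  obtain ⟨a₀, ha₀A⟩ := hne
  obtain ⟨c₀, hc₀, c₁, hc₁, hca⟩ := hA ha₀A
  obtain ⟨b, hbsum, hub⟩ := hbd
  obtain ⟨b₀, hb₀, b₁, hb₁, hbe⟩ := hbsum
  set β₀ : Ω →ₘ[μ] ℝ := |b₀ - c₀| with hβ₀def
  set β₁ : Ω →ₘ[μ] ℝ := |b₁ - c₁| with hβ₁def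
  have hβ₀ : β₀ ∈ X₀.carrier := abs_mem X₀ (sub_mem X₀ hb₀ hc₀)
  have hβ₁ : β₁ ∈ X₁.carrier := abs_mem X₁ (sub_mem X₁ hb₁ hc₁)
  have hβ₀0 : 0 ≤ β₀ := abs_nonneg' _
  have hβ₁0 : 0 ≤ β₁ := abs_nonneg' _
  -- the shifted truncated family
  set g : (Ω →ₘ[μ] ℝ) → (Ω →ₘ[μ] ℝ) := fun a => (a - a₀) ⊔ 0 with hgdef
  have hgle : ∀ a ∈ A, g a ≤ β₀ + β₁ := by
    intro a ha
    have h1 : a - a₀ ≤ b - a₀ := sub_mono (hub a ha)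
    have h2 : b - a₀ = (b₀ - c₀) + (b₁ - c₁) := by rw [hbe, hca]; abel
    have h3 : (b₀ - c₀) + (b₁ - c₁) ≤ β₀ + β₁ := add_mono (le_abs _) (le_abs _)
    have h4 : (0 : Ω →ₘ[μ] ℝ) ≤ β₀ + β₁ := by
      have := add_mono hβ₀0 hβ₁0; simpa using this
    exact sup_le (h1.trans (h2 ▸ h3)) h4
  have hg0 : ∀ a, 0 ≤ g a := fun a => le_sup_right
  -- the two component families
  set S₀ : Set (Ω →ₘ[μ] ℝ) := (fun a => g a ⊓ β₀) '' A with hS₀def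
  set S₁ : Set (Ω →ₘ[μ] ℝ) := (fun a => (g a - β₀) ⊔ 0) '' A with hS₁def
  have hS₀sub : S₀ ⊆ X₀.carrier := by
    rintro s ⟨a, ha, rfl⟩
    exact X₀.ideal_mem β₀ hβ₀ _ (abs_le_of_nonneg_le (le_inf (hg0 a) hβ₀0) inf_le_right)
  have hS₁sub : S₁ ⊆ X₁.carrier := by
    rintro s ⟨a, ha, rfl⟩
    exact X₁.ideal_mem β₁ hβ₁ _
      (abs_le_of_nonneg_le le_sup_right (sup_zero_le (hgle a ha) hβ₁0))
  obtain ⟨y₀, hy₀X, hy₀ub, hy₀least⟩ :=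
    H₀ S₀ hS₀sub ⟨_, ⟨a₀, ha₀A, rfl⟩⟩ ⟨β₀, hβ₀, by rintro s ⟨a, ha, rfl⟩; exact inf_le_right⟩
  obtain ⟨y₁, hy₁X, hy₁ub, hy₁least⟩ :=
    H₁ S₁ hS₁sub ⟨_, ⟨a₀, ha₀A, rfl⟩⟩
      ⟨β₁, hβ₁, by rintro s ⟨a, ha, rfl⟩; exact sup_zero_le (hgle a ha) hβ₁0⟩
  have hy₀β : y₀ ≤ β₀ := hy₀least β₀ hβ₀ (by rintro s ⟨a, ha, rfl⟩; exact inf_le_right)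
  have hy₀0 : 0 ≤ y₀ := (le_inf (hg0 a₀) hβ₀0).trans (hy₀ub _ ⟨a₀, ha₀A, rfl⟩)
  have hy₁0 : 0 ≤ y₁ := le_sup_right.trans (hy₁ub _ ⟨a₀, ha₀A, rfl⟩)
  have hy010 : (0 : Ω →ₘ[μ] ℝ) ≤ y₀ + y₁ := by
    have := add_mono hy₀0 hy₁0; simpa using this
  have hdec : ∀ a ∈ A, g a ≤ y₀ + y₁ := by
    intro a ha
    have h1 : g a = g a ⊓ β₀ + ((g a - β₀) ⊔ 0) := (decomp (g a) β₀).symm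
    rw [h1]
    exact add_mono (hy₀ub _ ⟨a, ha, rfl⟩) (hy₁ub _ ⟨a, ha, rfl⟩)
  refine ⟨y₀ + y₁ + a₀, ⟨y₀ + c₀, X₀.add_mem hy₀X hc₀, y₁ + c₁, X₁.add_mem hy₁X hc₁,
    by rw [hca]; abel⟩, ?_, ?_⟩
  · -- upper bound
    intro a ha
    calc a = (a - a₀) + a₀ := by abel
    _ ≤ g a + a₀ := add_mono le_sup_left le_rfl
    _ ≤ (y₀ + y₁) + a₀ := add_mono (hdec a ha) le_rfl
  · -- least
    intro z hz hzub
    have hz'0 : 0 ≤ z - a₀ := by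
      have := sub_mono (h := a₀) (hzub a₀ ha₀A)
      rwa [sub_self] at this
    have hgz : ∀ a ∈ A, g a ≤ z - a₀ := fun a ha =>
      sup_le (sub_mono (hzub a ha)) hz'0
    set v : Ω →ₘ[μ] ℝ := (z - a₀) ⊓ (y₀ + y₁) with hvdef
    have hv0 : 0 ≤ v := le_inf hz'0 hy010
    have hvy : v ≤ y₀ + y₁ := inf_le_right
    have hgv : ∀ a ∈ A, g a ≤ v := fun a ha => le_inf (hgz a ha) (hdec a ha)
    have hvβX : v ⊓ β₀ ∈ X₀.carrier :=
      X₀.ideal_mem β₀ hβ₀ _ (abs_le_of_nonneg_le (le_inf hv0 hβ₀0) inf_le_right)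
    have hy₀v : y₀ ≤ v ⊓ β₀ := by
      refine hy₀least _ hvβX ?_
      rintro s ⟨a, ha, rfl⟩
      exact inf_le_inf_right β₀ (hgv a ha)
    have hvsupy : (v - β₀) ⊔ 0 ≤ y₁ :=
      sup_zero_le (hvy.trans (add_mono hy₀β le_rfl)) hy₁0
    have hvsupX : (v - β₀) ⊔ 0 ∈ X₁.carrier :=
      X₁.ideal_mem y₁ hy₁X _ (abs_le_of_nonneg_le le_sup_right hvsupy)
    have hy₁v : y₁ ≤ (v - β₀) ⊔ 0 := by
      refine hy₁least _ hvsupX ?_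
      rintro s ⟨a, ha, rfl⟩
      exact sup_zero_mono (hgv a ha)
    have hsum : y₀ + y₁ ≤ v := by
      have := add_mono hy₀v hy₁v
      rwa [decomp v β₀] at this
    calc y₀ + y₁ + a₀ ≤ v + a₀ := add_mono hsum le_rfl
    _ ≤ (z - a₀) + a₀ := add_mono inf_le_left le_rfl
    _ = z := by abel

end BFLaux


/-- `X₀ + X₁` is a complete lattice if and only if both `X₀` and `X₁`
are complete lattices. -/
theorem hasLUBP_sumSet_iff
    (X₀ X₁ : BanachFunctionLattice Ω μ) :
    HasLUBP (sumSet X₀.toFunctionSpace X₁.toFunctionSpace) ↔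
      (HasLUBP X₀.carrier ∧ HasLUBP X₁.carrier) := by
  constructor
  · intro H
    exact ⟨BFLaux.hasLUBP_of_sum_left X₀ X₁ H, BFLaux.hasLUBP_of_sum_right X₀ X₁ H⟩
  · rintro ⟨H₀, H₁⟩
    exact BFLaux.hasLUBP_sum_of_both X₀ X₁ H₀ H₁
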